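/- Let U ⊆ ℝⁿ be a nonempty closed convex set with 0 ∉ U and with the ray property λU ⊆ U for all λ ≥ 1. Define ν̊_U(ξ) = sup{λ > 0 : ξ ∈ λU} (with sup ∅ = −∞) and let ν_U be its upper semicontinuous hull, ν_U(ξ) = limsup_{η → ξ} ν̊_U(η). Then ν_U is an anti-norm on ℝⁿ. -/

import Mathlib

open scoped Pointwise
open Filter Topology

/-- An anti-norm on a real normed space `E`: a function `ν : E → ℝ ∪ {−∞}`
(encoded as an `EReal`-valued function never equal to `+∞`) that is concave,
upper semicontinuous (closed hypograph), positively homogeneous, has nonempty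
effective domain, and is positive on the relative interior of its domain. -/
structure IsAntinorm {E : Type*} [NormedAddCommGroup E] [NormedSpace ℝ E]
    (ν : E → EReal) : Prop where
  ne_top : ∀ ξ, ν ξ ≠ ⊤
  concave : ∀ ξ η : E, ∀ a b : ℝ, 0 ≤ a → 0 ≤ b → a + b = 1 →
    (a : EReal) * ν ξ + (b : EReal) * ν η ≤ ν (a • ξ + b • η)
  closed_hypograph : IsClosed {p : E × ℝ | (p.2 : EReal) ≤ ν p.1}
  pos_homog : ∀ c : ℝ, 0 ≤ c → ∀ ξ : E, ν (c • ξ) = (c : EReal) * ν ξ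
  dom_nonempty : {ξ : E | ν ξ ≠ ⊥}.Nonempty
  pos_on_ri : ∀ ξ ∈ intrinsicInterior ℝ {ξ : E | ν ξ ≠ ⊥}, 0 < ν ξ

/-- `ν̊_U(ξ) = sup{λ > 0 : ξ ∈ λU}`, with `sup ∅ = −∞` (in `EReal`). -/
noncomputable def preAntinorm {E : Type*} [NormedAddCommGroup E]
    [NormedSpace ℝ E] (U : Set E) (ξ : E) : EReal :=
  sSup {l : EReal | ∃ r : ℝ, 0 < r ∧ ξ ∈ r • U ∧ l = (r : EReal)}

/-- `ν_U(ξ) = limsup_{η → ξ} ν̊_U(η)`, the upper semicontinuous hull. -/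
noncomputable def antinormOf {E : Type*} [NormedAddCommGroup E]
    [NormedSpace ℝ E] (U : Set E) (ξ : E) : EReal :=
  limsup (preAntinorm U) (𝓝 ξ)

section Aux

variable {E : Type*} [NormedAddCommGroup E] [NormedSpace ℝ E] {U : Set E}

private lemma limsup_pure' {α : Type*} (u : α → EReal) (a : α) :
    limsup u (pure a) = u a := by
  rw [Filter.limsup_eq]
  simp only [Filter.eventually_pure]
  exact csInf_Ici

private lemma limsup_map' {α β : Type*} (m : α → β) (u : β → EReal) (f : Filter α) :
    limsup u (Filter.map m f) = limsup (fun x => u (m x)) f := by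
  rw [Filter.limsup_eq, Filter.limsup_eq]
  simp only [Filter.eventually_map]

private lemma le_pre {r : ℝ} (hr : 0 < r) {ξ : E} (h : ξ ∈ r • U) :
    (r : EReal) ≤ preAntinorm U ξ :=
  le_sSup ⟨r, hr, h, rfl⟩

private lemma pre_le (ξ : E) {d : ℝ} (hd : 0 < d) (hU : ∀ u ∈ U, d ≤ ‖u‖) :
    preAntinorm U ξ ≤ ((‖ξ‖ / d : ℝ) : EReal) := by
  refine sSup_le ?_
  rintro l ⟨r, hr, hmem, rfl⟩
  obtain ⟨u, hu, rfl⟩ := hmem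
  rw [EReal.coe_le_coe_iff, norm_smul, Real.norm_eq_abs, abs_of_pos hr, le_div_iff₀ hd]
  nlinarith [hU u hu, hr.le]

private lemma pre_exceed {ξ : E} {α : EReal} (h : α < preAntinorm U ξ) :
    ∃ r : ℝ, 0 < r ∧ ξ ∈ r • U ∧ α < (r : EReal) := by
  obtain ⟨l, hl, hαl⟩ := lt_sSup_iff.mp h
  obtain ⟨r, hr, hmem, rfl⟩ := hl
  exact ⟨r, hr, hmem, hαl⟩

private lemma pre_attained (hcl : IsClosed U) {d : ℝ} (hd : 0 < d)
    (hU : ∀ u ∈ U, d ≤ ‖u‖) {ξ : E} (h : preAntinorm U ξ ≠ ⊥) :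
    ∃ r : ℝ, 0 < r ∧ ξ ∈ r • U ∧ preAntinorm U ξ = (r : EReal) := by
  have hne : {r : ℝ | 0 < r ∧ ξ ∈ r • U}.Nonempty := by
    by_contra hcon
    apply h
    rw [preAntinorm]
    convert sSup_empty
    · rfl
    rw [Set.eq_empty_iff_forall_notMem]
    rintro l ⟨r, hr, hmem, rfl⟩
    exact hcon ⟨r, hr, hmem⟩
  set S := {r : ℝ | 0 < r ∧ ξ ∈ r • U} with hSdef
  have hbdd : BddAbove S := by
    refine ⟨‖ξ‖ / d, ?_⟩
    rintro r ⟨hr, hmem⟩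
    exact EReal.coe_le_coe_iff.mp ((le_pre hr hmem).trans (pre_le ξ hd hU))
  have hSne : S.Nonempty := hne
  obtain ⟨r0, hr0, hmem0⟩ := hne
  have ht0 : 0 < sSup S := lt_of_lt_of_le hr0 (le_csSup hbdd ⟨hr0, hmem0⟩)
  obtain ⟨seq, hmono, htend, hmemseq⟩ := exists_seq_tendsto_sSup hSne hbdd
  have hmemU : ∀ k, (seq k)⁻¹ • ξ ∈ U := fun k =>
    (Set.mem_smul_set_iff_inv_smul_mem₀ (hmemseq k).1.ne' U ξ).mp (hmemseq k).2
  have htd : Filter.Tendsto (fun k => (seq k)⁻¹ • ξ) atTop (𝓝 ((sSup S)⁻¹ • ξ)) :=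
    (htend.inv₀ ht0.ne').smul_const ξ
  have htmem : (sSup S)⁻¹ • ξ ∈ U :=
    hcl.mem_of_tendsto htd (Filter.Eventually.of_forall hmemU)
  have hξt : ξ ∈ sSup S • U :=
    (Set.mem_smul_set_iff_inv_smul_mem₀ ht0.ne' U ξ).mpr htmem
  refine ⟨sSup S, ht0, hξt, le_antisymm ?_ (le_pre ht0 hξt)⟩
  refine sSup_le ?_
  rintro l ⟨r, hr, hmem, rfl⟩
  exact EReal.coe_le_coe_iff.mpr (le_csSup hbdd ⟨hr, hmem⟩)

private lemma comb_mem (hconv : Convex ℝ U) {r s a b : ℝ} (hr : 0 < r) (hs : 0 < s)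
    (ha : 0 < a) (hb : 0 < b) {ξ η : E} (hξ : ξ ∈ r • U) (hη : η ∈ s • U) :
    a • ξ + b • η ∈ (a * r + b * s) • U := by
  obtain ⟨u, hu, rfl⟩ := hξ
  obtain ⟨v, hv, rfl⟩ := hη
  have hT : 0 < a * r + b * s := by positivity
  have hmem := hconv hu hv (a := a * r / (a * r + b * s)) (b := b * s / (a * r + b * s))
    (by positivity) (by positivity) (by field_simp)
  refine ⟨_, hmem, ?_⟩
  show (a * r + b * s) • ((a * r / (a * r + b * s)) • u + (b * s / (a * r + b * s)) • v) =
    a • (r • u) + b • (s • v)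
  rw [smul_add]
  simp only [smul_smul]
  congr 1 <;> congr 1 <;> field_simp

end Aux

/-- If `U ⊆ ℝⁿ` is nonempty, closed, convex, does not contain the origin and
has the ray property `λU ⊆ U` for all `λ ≥ 1`, then `ν_U` is an anti-norm. -/
theorem antinormOf_isAntinorm {n : ℕ} (U : Set (EuclideanSpace ℝ (Fin n)))
    (hne : U.Nonempty) (hcl : IsClosed U) (hconv : Convex ℝ U)
    (h0 : (0 : EuclideanSpace ℝ (Fin n)) ∉ U)
    (hray : ∀ c : ℝ, 1 ≤ c → c • U ⊆ U) :
    IsAntinorm (antinormOf U) := by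
  have hνdef : ∀ ξ : EuclideanSpace ℝ (Fin n), antinormOf U ξ = limsup (preAntinorm U) (𝓝 ξ) := fun _ => rfl
  -- distance of U from the origin
  obtain ⟨d, hd, hdU⟩ : ∃ d : ℝ, 0 < d ∧ ∀ u ∈ U, d ≤ ‖u‖ := by
    obtain ⟨ε, hε, hball⟩ := Metric.isOpen_iff.mp hcl.isOpen_compl 0 h0
    refine ⟨ε, hε, fun u hu => ?_⟩
    by_contra hlt
    push_neg at hlt
    exact hball (by simpa [Metric.mem_ball] using hlt) hu
  -- the value at the point bounds the limsup from below
  have hpure : ∀ ξ : EuclideanSpace ℝ (Fin n), preAntinorm U ξ ≤ antinormOf U ξ := by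
    intro ξ
    rw [hνdef ξ, ← limsup_pure' (preAntinorm U) ξ]
    exact Filter.limsup_le_limsup_of_le (pure_le_nhds ξ)
  -- upper bound for the limsup
  have hub : ∀ ξ : EuclideanSpace ℝ (Fin n), antinormOf U ξ ≤ (((‖ξ‖ + 1) / d : ℝ) : EReal) := by
    intro ξ
    rw [hνdef ξ]
    refine Filter.limsup_le_of_le (by isBoundedDefault) ?_
    have hnorm : ∀ᶠ η : EuclideanSpace ℝ (Fin n) in 𝓝 ξ, ‖η‖ < ‖ξ‖ + 1 :=
      (continuous_norm.tendsto ξ).eventually_lt_const (lt_add_one ‖ξ‖)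
    filter_upwards [hnorm] with η hη
    refine (pre_le η hd hdU).trans ?_
    rw [EReal.coe_le_coe_iff]
    exact div_le_div_of_nonneg_right hη.le hd.le
  have hnetop : ∀ ξ : EuclideanSpace ℝ (Fin n), antinormOf U ξ ≠ ⊤ := fun ξ =>
    ne_top_of_le_ne_top (EReal.coe_ne_top _) (hub ξ)
  -- concavity with positive weights
  have hconc : ∀ ξ η : EuclideanSpace ℝ (Fin n), ∀ a b : ℝ, 0 < a → 0 < b → a + b = 1 →
      (a : EReal) * antinormOf U ξ + (b : EReal) * antinormOf U η ≤
        antinormOf U (a • ξ + b • η) := by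
    intro ξ η a b ha hb hab
    rcases eq_or_ne (antinormOf U ξ) ⊥ with hbξ | hbξ
    · rw [hbξ, EReal.coe_mul_bot_of_pos ha, EReal.bot_add]
      exact bot_le
    rcases eq_or_ne (antinormOf U η) ⊥ with hbη | hbη
    · rw [hbη, EReal.coe_mul_bot_of_pos hb, EReal.add_bot]
      exact bot_le
    obtain ⟨x, hx⟩ : ∃ x : ℝ, antinormOf U ξ = (x : EReal) :=
      ⟨(antinormOf U ξ).toReal, (EReal.coe_toReal (hnetop ξ) hbξ).symm⟩
    obtain ⟨y, hy⟩ : ∃ y : ℝ, antinormOf U η = (y : EReal) :=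
      ⟨(antinormOf U η).toReal, (EReal.coe_toReal (hnetop η) hbη).symm⟩
    rw [hx, hy, ← EReal.coe_mul, ← EReal.coe_mul, ← EReal.coe_add]
    by_contra hcon
    push_neg at hcon
    obtain ⟨w, hw1, hw2⟩ := EReal.exists_between_coe_real hcon
    rw [EReal.coe_lt_coe_iff] at hw2
    set ε : ℝ := a * x + b * y - w with hε
    have hεpos : 0 < ε := by simp only [hε]; linarith
    have hfr1 : ∃ᶠ ξ' in 𝓝 ξ, ((x - ε : ℝ) : EReal) < preAntinorm U ξ' := by
      apply Filter.frequently_lt_of_lt_limsup (by isBoundedDefault)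
      rw [← hνdef ξ, hx, EReal.coe_lt_coe_iff]
      linarith
    have hfr2 : ∃ᶠ η' in 𝓝 η, ((y - ε : ℝ) : EReal) < preAntinorm U η' := by
      apply Filter.frequently_lt_of_lt_limsup (by isBoundedDefault)
      rw [← hνdef η, hy, EReal.coe_lt_coe_iff]
      linarith
    have key : ∃ᶠ ζ in 𝓝 (a • ξ + b • η), (w : EReal) ≤ preAntinorm U ζ := by
      rw [Filter.frequently_iff]
      intro W hW
      have hcont : ContinuousAt (fun p : EuclideanSpace ℝ (Fin n) × EuclideanSpace ℝ (Fin n) => a • p.1 + b • p.2) (ξ, η) := by fun_prop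
      have hprei : (fun p : EuclideanSpace ℝ (Fin n) × EuclideanSpace ℝ (Fin n) => a • p.1 + b • p.2) ⁻¹' W ∈ 𝓝 (ξ, η) :=
        hcont.preimage_mem_nhds hW
      rw [nhds_prod_eq, Filter.mem_prod_iff] at hprei
      obtain ⟨V1, hV1, V2, hV2, hsub⟩ := hprei
      obtain ⟨ξ', hξ'1, hξ'2⟩ := Filter.frequently_iff.mp hfr1 hV1
      obtain ⟨η', hη'1, hη'2⟩ := Filter.frequently_iff.mp hfr2 hV2
      obtain ⟨r, hrpos, hrmem, hrgt⟩ := pre_exceed hξ'2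
      obtain ⟨s, hspos, hsmem, hsgt⟩ := pre_exceed hη'2
      rw [EReal.coe_lt_coe_iff] at hrgt hsgt
      refine ⟨a • ξ' + b • η', hsub (Set.mk_mem_prod hξ'1 hη'1), ?_⟩
      have hcm := comb_mem hconv hrpos hspos ha hb hrmem hsmem
      refine le_trans ?_ (le_pre (by positivity) hcm)
      rw [EReal.coe_le_coe_iff]
      nlinarith [mul_lt_mul_of_pos_left hrgt ha, mul_lt_mul_of_pos_left hsgt hb]
    have hge := Filter.le_limsup_of_frequently_le key (by isBoundedDefault)
    rw [← hνdef (a • ξ + b • η)] at hge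
    exact absurd hge (not_le.mpr hw1)
  -- value at the origin
  have hν0 : antinormOf U (0 : EuclideanSpace ℝ (Fin n)) = 0 := by
    refine le_antisymm ?_ ?_
    · by_contra hlt
      push_neg at hlt
      obtain ⟨w, hw1, hw2⟩ := EReal.exists_between_coe_real hlt
      have hwpos : (0 : ℝ) < w := by exact_mod_cast hw1
      rw [hνdef 0] at hw2
      have hfr := Filter.frequently_lt_of_lt_limsup (by isBoundedDefault) hw2
      have hev : ∀ᶠ η : EuclideanSpace ℝ (Fin n) in 𝓝 0, preAntinorm U η < (w : EReal) := by
        have hball := Metric.ball_mem_nhds (0 : EuclideanSpace ℝ (Fin n)) (show 0 < w * d by positivity)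
        filter_upwards [hball] with η hη
        rw [mem_ball_zero_iff] at hη
        refine lt_of_le_of_lt (pre_le η hd hdU) ?_
        rw [EReal.coe_lt_coe_iff, div_lt_iff₀ hd]
        linarith
      obtain ⟨η, hη1, hη2⟩ := (hfr.and_eventually hev).exists
      exact absurd hη2 (not_lt.mpr hη1.le)
    · rw [hνdef 0]
      refine Filter.le_limsup_of_frequently_le ?_ (by isBoundedDefault)
      rw [Filter.frequently_iff]
      intro W hW
      obtain ⟨u, hu⟩ := hne
      have hcont : ContinuousAt (fun t : ℝ => t • u) 0 := by fun_prop
      have hprei : (fun t : ℝ => t • u) ⁻¹' W ∈ 𝓝 (0 : ℝ) :=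
        hcont.preimage_mem_nhds (by simpa using hW)
      obtain ⟨ε, hε, hball⟩ := Metric.mem_nhds_iff.mp hprei
      have hmemW : (ε / 2) • u ∈ W := by
        apply hball
        rw [Metric.mem_ball, Real.dist_eq, sub_zero, abs_of_pos (half_pos hε)]
        linarith
      refine ⟨(ε / 2) • u, hmemW, ?_⟩
      refine le_trans ?_ (le_pre (half_pos hε) (Set.smul_mem_smul_set hu))
      exact_mod_cast (half_pos hε).le
  -- positivity lower bounds
  have hgeone : ∀ u ∈ U, (1 : EReal) ≤ antinormOf U u := by
    intro u hu
    refine le_trans ?_ (hpure u)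
    have h1 : u ∈ (1 : ℝ) • U := by rw [one_smul]; exact hu
    have := le_pre one_pos h1
    simpa using this
  have hprebot : ∀ η : EuclideanSpace ℝ (Fin n), preAntinorm U η < 0 → preAntinorm U η = ⊥ := by
    intro η h
    by_contra hb
    obtain ⟨r, hr, _, hval⟩ := pre_attained hcl hd hdU hb
    rw [hval] at h
    have : r < 0 := by exact_mod_cast h
    linarith
  have hnonneg : ∀ ξ : EuclideanSpace ℝ (Fin n), antinormOf U ξ ≠ ⊥ → 0 ≤ antinormOf U ξ := by
    intro ξ hξ
    by_contra hlt
    push_neg at hlt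
    obtain ⟨w, hw1, hw2⟩ := EReal.exists_between_coe_real hlt
    have hwneg : (w : EReal) < 0 := hw2
    rw [hνdef ξ] at hw1
    have hev := Filter.eventually_lt_of_limsup_lt hw1 (by isBoundedDefault)
    apply hξ
    rw [hνdef ξ]
    refine le_bot_iff.mp ?_
    refine Filter.limsup_le_of_le (by isBoundedDefault) ?_
    filter_upwards [hev] with η hη
    rw [hprebot η (lt_trans hη hwneg)]
  refine ⟨hnetop, ?_, ?_, ?_, ?_, ?_⟩
  -- concavity
  · intro ξ η a b ha hb hab
    rcases ha.eq_or_lt with rfl | ha'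
    · have hb1 : b = 1 := by linarith
      subst hb1
      simp only [EReal.coe_zero, zero_mul, zero_add, zero_smul, EReal.coe_one, one_mul, one_smul]
      exact le_refl _
    rcases hb.eq_or_lt with rfl | hb'
    · have ha1 : a = 1 := by linarith
      subst ha1
      simp only [EReal.coe_zero, zero_mul, add_zero, zero_smul, EReal.coe_one, one_mul, one_smul]
      exact le_refl _
    exact hconc ξ η a b ha' hb' hab
  -- closed hypograph
  · have hopen : IsOpen {p : EuclideanSpace ℝ (Fin n) × ℝ | antinormOf U p.1 < (p.2 : EReal)} := by
      rw [isOpen_iff_mem_nhds]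
      rintro ⟨x, t⟩ hxt
      simp only [Set.mem_setOf_eq] at hxt
      obtain ⟨w, hw1, hw2⟩ := EReal.exists_between_coe_real hxt
      rw [hνdef x] at hw1
      have hev : ∀ᶠ η : EuclideanSpace ℝ (Fin n) in 𝓝 x, preAntinorm U η < (w : EReal) :=
        Filter.eventually_lt_of_limsup_lt hw1 (by isBoundedDefault)
      have hxV : x ∈ interior {η : EuclideanSpace ℝ (Fin n) | preAntinorm U η < (w : EReal)} :=
        mem_interior_iff_mem_nhds.mpr hev
      have hVν : ∀ η ∈ interior {η : EuclideanSpace ℝ (Fin n) | preAntinorm U η < (w : EReal)},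
          antinormOf U η ≤ (w : EReal) := by
        intro η hη
        rw [hνdef η]
        refine Filter.limsup_le_of_le (by isBoundedDefault) ?_
        filter_upwards [isOpen_interior.mem_nhds hη] with ζ hζ
        exact (interior_subset hζ).le
      rw [EReal.coe_lt_coe_iff] at hw2
      have hmem : interior {η : EuclideanSpace ℝ (Fin n) | preAntinorm U η < (w : EReal)} ×ˢ Set.Ioi w ∈ 𝓝 (x, t) := by
        rw [nhds_prod_eq]
        exact Filter.prod_mem_prod (isOpen_interior.mem_nhds hxV) (Ioi_mem_nhds hw2)
      refine Filter.mem_of_superset hmem ?_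
      rintro ⟨η, s⟩ ⟨hη, hs⟩
      simp only [Set.mem_setOf_eq]
      refine lt_of_le_of_lt (hVν η hη) ?_
      exact_mod_cast hs
    have hcompl : {p : EuclideanSpace ℝ (Fin n) × ℝ | ((p.2 : ℝ) : EReal) ≤ antinormOf U p.1} =
        {p : EuclideanSpace ℝ (Fin n) × ℝ | antinormOf U p.1 < (p.2 : EReal)}ᶜ := by
      ext p
      simp [not_lt]
    rw [hcompl]
    exact hopen.isClosed_compl
  -- positive homogeneity
  · intro c hc ξ
    rcases hc.eq_or_lt with rfl | hc'
    · simp only [zero_smul, EReal.coe_zero, zero_mul]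
      exact hν0
    · have hpre : ∀ ζ : EuclideanSpace ℝ (Fin n), preAntinorm U (c • ζ) = (c : EReal) * preAntinorm U ζ := by
        intro ζ
        rcases eq_or_ne (preAntinorm U ζ) ⊥ with hb | hb
        · rw [hb, EReal.coe_mul_bot_of_pos hc']
          by_contra hb2
          obtain ⟨r, hr, hmem, hval⟩ := pre_attained hcl hd hdU hb2
          obtain ⟨u, hu, hequ⟩ := hmem
          have hζ : ζ ∈ (r / c) • U := by
            refine ⟨u, hu, ?_⟩
            show (r / c) • u = ζ
            have : (r / c) • u = c⁻¹ • (r • u) := by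
              rw [smul_smul, div_eq_inv_mul]
            have hequ' : r • u = c • ζ := hequ
            rw [this, hequ', inv_smul_smul₀ hc'.ne']
          have := le_pre (show 0 < r / c by positivity) hζ
          rw [hb] at this
          rw [le_bot_iff] at this
          exact EReal.coe_ne_bot _ this
        · obtain ⟨r, hr, hmem, hval⟩ := pre_attained hcl hd hdU hb
          have hmem2 : c • ζ ∈ (c * r) • U := by
            obtain ⟨u, hu, rfl⟩ := hmem
            exact ⟨u, hu, by show (c * r) • u = c • (r • u); rw [smul_smul]⟩
          have hb2 : preAntinorm U (c • ζ) ≠ ⊥ := by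
            intro hb2
            have := le_pre (show 0 < c * r by positivity) hmem2
            rw [hb2] at this
            rw [le_bot_iff] at this
            exact EReal.coe_ne_bot _ this
          obtain ⟨r1, hr1, hmem1, hval1⟩ := pre_attained hcl hd hdU hb2
          have h1 : c * r ≤ r1 := by
            have := le_pre (show 0 < c * r by positivity) hmem2
            rw [hval1] at this
            exact_mod_cast this
          have h2 : r1 ≤ c * r := by
            obtain ⟨v, hv, hev⟩ := hmem1
            have hζ : ζ ∈ (r1 / c) • U := by
              refine ⟨v, hv, ?_⟩
              show (r1 / c) • v = ζ
              have : (r1 / c) • v = c⁻¹ • (r1 • v) := by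
                rw [smul_smul, div_eq_inv_mul]
              have hev' : r1 • v = c • ζ := hev
              rw [this, hev', inv_smul_smul₀ hc'.ne']
            have := le_pre (show 0 < r1 / c by positivity) hζ
            rw [hval] at this
            have h3 : r1 / c ≤ r := by exact_mod_cast this
            rw [div_le_iff₀ hc'] at h3
            linarith
          rw [hval1, hval, ← EReal.coe_mul]
          exact_mod_cast le_antisymm h2 h1
      have hmap : 𝓝 (c • ξ) = Filter.map (fun ζ : EuclideanSpace ℝ (Fin n) => c • ζ) (𝓝 ξ) := by
        have := (Homeomorph.smulOfNeZero (α := EuclideanSpace ℝ (Fin n)) c hc'.ne').map_nhds_eq ξ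
        simpa using this.symm
      rw [hνdef (c • ξ), hνdef ξ, hmap, limsup_map']
      simp only [hpre]
      have hinv : ∀ x : EReal, ((c⁻¹ : ℝ) : EReal) * (((c : ℝ) : EReal) * x) = x := fun x => by
        rw [← mul_assoc, ← EReal.coe_mul, inv_mul_cancel₀ hc'.ne', EReal.coe_one, one_mul]
      have hcnn : (0 : EReal) ≤ ((c : ℝ) : EReal) := by exact_mod_cast hc'.le
      have hcinn : (0 : EReal) ≤ ((c⁻¹ : ℝ) : EReal) := by
        exact_mod_cast (inv_nonneg.mpr hc'.le)
      let g : EReal ≃o EReal :=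
        { toFun := fun x => ((c : ℝ) : EReal) * x
          invFun := fun x => ((c⁻¹ : ℝ) : EReal) * x
          left_inv := hinv
          right_inv := fun x => by
            show ((c : ℝ) : EReal) * (((c⁻¹ : ℝ) : EReal) * x) = x
            rw [← mul_assoc, ← EReal.coe_mul, mul_inv_cancel₀ hc'.ne', EReal.coe_one, one_mul]
          map_rel_iff' := by
            intro p q
            simp only [Equiv.coe_fn_mk]
            constructor
            · intro h
              have h2 := mul_le_mul_of_nonneg_left h hcinn
              rwa [hinv, hinv] at h2
            · intro h
              exact mul_le_mul_of_nonneg_left h hcnn }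
      exact (g.limsup_apply (by isBoundedDefault) (by isBoundedDefault)
        (by isBoundedDefault) (by isBoundedDefault)).symm
  -- nonempty domain
  · obtain ⟨u, hu⟩ := hne
    refine ⟨u, ?_⟩
    intro hbot
    have := hgeone u hu
    rw [hbot, le_bot_iff, ← EReal.coe_one] at this
    exact EReal.coe_ne_bot _ this
  -- positivity on the intrinsic interior
  · intro ξ hξ
    set D := {ζ : EuclideanSpace ℝ (Fin n) | antinormOf U ζ ≠ ⊥} with hD
    obtain ⟨x, hx, rfl⟩ := mem_intrinsicInterior.mp hξ
    obtain ⟨u, hu⟩ := hne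
    have huD : u ∈ D := by
      intro hbot
      have := hgeone u hu
      rw [hbot, le_bot_iff, ← EReal.coe_one] at this
      exact EReal.coe_ne_bot _ this
    have huspan : u ∈ affineSpan ℝ D := subset_affineSpan ℝ D huD
    have hmemf : ∀ t : ℝ, (1 + t) • ((x : EuclideanSpace ℝ (Fin n)) - u) + u ∈ affineSpan ℝ D := by
      intro t
      have := AffineSubspace.smul_vsub_vadd_mem (affineSpan ℝ D) (1 + t) x.2 huspan huspan
      simpa [vsub_eq_sub, vadd_eq_add] using this
    set f : ℝ → affineSpan ℝ D := fun t => ⟨(1 + t) • ((x : EuclideanSpace ℝ (Fin n)) - u) + u, hmemf t⟩ with hf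
    have hfc : Continuous f := by
      apply Continuous.subtype_mk
      fun_prop
    have hf0 : f 0 = x := by
      apply Subtype.ext
      simp [hf]
    have hnb : f ⁻¹' interior ((↑) ⁻¹' D) ∈ 𝓝 (0 : ℝ) := by
      apply hfc.continuousAt.preimage_mem_nhds
      rw [hf0]
      exact isOpen_interior.mem_nhds hx
    obtain ⟨ε, hε, hball⟩ := Metric.mem_nhds_iff.mp hnb
    have htpos : 0 < ε / 2 := half_pos hε
    have htmem : f (ε / 2) ∈ interior ((↑) ⁻¹' D) := by
      apply hball
      rw [Metric.mem_ball, Real.dist_eq, sub_zero, abs_of_pos htpos]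
      linarith
    have hwD' : f (ε / 2) ∈ (Subtype.val ⁻¹' D : Set (affineSpan ℝ D)) :=
      interior_subset htmem
    have hwD : ((1 + ε / 2) • ((x : EuclideanSpace ℝ (Fin n)) - u) + u) ∈ D := hwD'
    set t : ℝ := ε / 2
    set w : EuclideanSpace ℝ (Fin n) := (1 + t) • ((x : EuclideanSpace ℝ (Fin n)) - u) + u with hwdef
    have h1t : 0 < 1 + t := by linarith
    set a : ℝ := (1 + t)⁻¹ with hadef
    set b : ℝ := t / (1 + t) with hbdef
    have hapos : 0 < a := by positivity
    have hbpos : 0 < b := by positivity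
    have hab : a + b = 1 := by
      rw [hadef, hbdef]
      field_simp
    have hxw : a • w + b • u = (x : EuclideanSpace ℝ (Fin n)) := by
      rw [hwdef, smul_add, smul_smul, hadef, inv_mul_cancel₀ h1t.ne', one_smul, add_assoc,
        ← add_smul, ← hadef, hab, one_smul, sub_add_cancel]
    have hcw := hconc w u a b hapos hbpos hab
    rw [hxw] at hcw
    have hν_w : 0 ≤ antinormOf U w := hnonneg w hwD
    have hν_u := hgeone u hu
    have h1 : (0 : EReal) ≤ (a : EReal) * antinormOf U w := by
      have := mul_le_mul_of_nonneg_left hν_w (show (0 : EReal) ≤ (a : EReal) by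
        exact_mod_cast hapos.le)
      simpa using this
    have h2 : (b : EReal) ≤ (b : EReal) * antinormOf U u := by
      have := mul_le_mul_of_nonneg_left hν_u (show (0 : EReal) ≤ (b : EReal) by
        exact_mod_cast hbpos.le)
      simpa using this
    calc (0 : EReal) < (b : EReal) := by exact_mod_cast hbpos
    _ ≤ (a : EReal) * antinormOf U w + (b : EReal) * antinormOf U u := by
        calc (b : EReal) = 0 + (b : EReal) := (zero_add _).symm
        _ ≤ _ := add_le_add h1 h2
    _ ≤ antinormOf U (x : EuclideanSpace ℝ (Fin n)) := hcw
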